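/- Let w : ℚ ∩ (0,1) → G satisfy w(1-α) = w(α) and w(α)w(β)^α = w(αβ) w(α(1-β)/(1-αβ))^{1-αβ} for a uniquely divisible abelian group G. Then there exists a unique homomorphism χ : ℚ₊* → G with χ(1/n) = w applied via formula (4n) to the uniform point (1/n,…,1/n), and w(β) = χ(β)^β χ(1-β)^{1-β} for all β ∈ ℚ ∩ (0,1). -/

import Mathlib

section Aux

variable {G : Type*} [AddCommGroup G] [Module ℚ G] (w : ℚ → G)

private def Tent : ℕ → G := fun n => ∑ j ∈ Finset.Icc 2 n, (j : ℚ) • w (1 / j)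

private lemma Tent_one : Tent w 1 = 0 := by simp [Tent]

private lemma Tent_succ (n : ℕ) (hn : 1 ≤ n) :
    Tent w (n + 1) = Tent w n + ((n : ℚ) + 1) • w (1 / ((n : ℚ) + 1)) := by
  unfold Tent
  rw [Finset.sum_Icc_succ_top (by omega)]
  push_cast
  ring_nf


private def Lent : ℕ → G := fun n => ((n:ℚ))⁻¹ • Tent w n

private lemma Lent_one : Lent w 1 = 0 := by simp [Lent, Tent_one]

private def chiEnt : ℚ → G := fun q => Lent w q.den - Lent w q.num.natAbs

variable (hsym : ∀ α : ℚ, 0 < α → α < 1 → w (1 - α) = w α)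
  (hassoc : ∀ α β : ℚ, 0 < α → α < 1 → 0 < β → β < 1 →
      w α + α • w β =
        w (α * β) + (1 - α * β) • w (α * (1 - β) / (1 - α * β)))
include hsym hassoc

private lemma Tent_key : ∀ q p : ℕ, 1 ≤ p → 1 ≤ q →
    Tent w (p + q) = Tent w p + Tent w q + ((p + q : ℕ) : ℚ) • w (p / (p + q)) := by
  intro q
  induction q with
  | zero => omega
  | succ k IH =>
    intro p hp _
    have hp0 : (0:ℚ) < p := by exact_mod_cast hp
    rcases Nat.eq_or_lt_of_le (Nat.one_le_iff_ne_zero.mpr (Nat.succ_ne_zero k)) with h1 | h1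
    · -- k = 0
      have hk : k = 0 := by omega
      subst hk
      have h2 : (0:ℚ) < (p:ℚ) + 1 := by positivity
      have hs := hsym (1 / ((p:ℚ) + 1)) (by positivity) (by
        rw [div_lt_one h2]; linarith)
      have h3 : 1 - 1 / ((p:ℚ) + 1) = p / (p + 1) := by field_simp; ring
      rw [h3] at hs
      rw [Tent_succ w p hp, Tent_one]
      push_cast
      rw [hs]
      abel
    · -- k ≥ 1
      have hk : 1 ≤ k := by omega
      have hk0 : (0:ℚ) < k := by exact_mod_cast hk
      have hN0 : (0:ℚ) < (p:ℚ) + k + 1 := by positivity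
      have hNne : ((p:ℚ) + k + 1) ≠ 0 := hN0.ne'
      have hpk0 : (0:ℚ) < (p:ℚ) + k := by positivity
      have hpkne : ((p:ℚ) + k) ≠ 0 := hpk0.ne'
      have hk1ne : ((k:ℚ) + 1) ≠ 0 := by positivity
      have hA := hassoc (((p:ℚ) + k) / ((p:ℚ) + k + 1)) ((p:ℚ) / ((p:ℚ) + k))
        (by positivity) (by rw [div_lt_one hN0]; linarith)
        (by positivity) (by rw [div_lt_one hpk0]; linarith)
      have e1 : ((p:ℚ) + k) / ((p:ℚ) + k + 1) * ((p:ℚ) / ((p:ℚ) + k)) = (p:ℚ) / ((p:ℚ) + k + 1) := by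
        field_simp
      have e2 : ((p:ℚ) + k) / ((p:ℚ) + k + 1) * (1 - (p:ℚ) / ((p:ℚ) + k)) /
          (1 - ((p:ℚ) + k) / ((p:ℚ) + k + 1) * ((p:ℚ) / ((p:ℚ) + k)))
          = (k:ℚ) / ((k:ℚ) + 1) := by
        rw [e1]
        rw [div_eq_div_iff (by
          have : (p:ℚ) / ((p:ℚ) + k + 1) < 1 := by rw [div_lt_one hN0]; linarith
          linarith) hk1ne]
        field_simp
        ring
      rw [e1] at hA
      rw [show ((p:ℚ) + k) / ((p:ℚ) + k + 1) * (1 - (p:ℚ) / ((p:ℚ) + k)) /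
          (1 - (p:ℚ) / ((p:ℚ) + k + 1)) = (k:ℚ) / ((k:ℚ) + 1) by rw [← e2, e1]] at hA
      have e3 : 1 - (p:ℚ)/((p:ℚ) + k + 1) = ((k:ℚ)+1)/((p:ℚ) + k + 1) := by
        field_simp; ring
      rw [e3] at hA
      -- symmetry facts
      have hs1 : w (((p:ℚ) + k) / ((p:ℚ) + k + 1)) = w (1 / ((p:ℚ) + k + 1)) := by
        rw [← hsym (1/((p:ℚ) + k + 1)) (by positivity) (by rw [div_lt_one hN0]; linarith)]
        congr 1
        field_simp; ring
      have hs2 : w ((k:ℚ) / ((k:ℚ)+1)) = w (1 / ((k:ℚ)+1)) := by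
        rw [← hsym (1/((k:ℚ)+1)) (by positivity) (by rw [div_lt_one (by positivity)]; linarith)]
        congr 1
        field_simp; ring
      rw [hs1, hs2] at hA
      -- telescoping and IH
      have hT1 : Tent w (p + k + 1) = Tent w (p + k) + ((p:ℚ) + k + 1) • w (1 / ((p:ℚ) + k + 1)) := by
        have h := Tent_succ w (p + k) (by omega)
        rw [h]; push_cast; ring_nf
      have hT2 : Tent w (k + 1) = Tent w k + ((k:ℚ) + 1) • w (1 / ((k:ℚ)+1)) :=
        Tent_succ w k hk
      have hIH := IH p hp hk
      have hgoal : p + (k+1) = p + k + 1 := by omega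
      rw [hgoal, hT1, hIH, hT2]
      have hcast2 : ((p + k : ℕ) : ℚ) = (p:ℚ) + k := by push_cast; ring
      have hcast : ((p + k + 1 : ℕ) : ℚ) = (p:ℚ) + k + 1 := by push_cast; ring
      rw [hcast2, hcast]
      have hgoal2 : w ((p:ℚ) / ((p:ℚ) + ↑(k+1))) = w ((p:ℚ)/((p:ℚ) + k + 1)) := by
        push_cast; ring_nf
      rw [hgoal2]
      have hA' : ((p:ℚ)+k+1) • w (1/((p:ℚ)+k+1)) + ((p:ℚ)+k) • w ((p:ℚ)/((p:ℚ)+k)) =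
          ((p:ℚ)+k+1) • w ((p:ℚ)/((p:ℚ)+k+1)) + ((k:ℚ)+1) • w (1/((k:ℚ)+1)) := by
        have h := congrArg (fun x => ((p:ℚ)+k+1) • x) hA
        simp only [smul_add, smul_smul] at h
        rw [show ((p:ℚ)+k+1) * (((p:ℚ)+k)/((p:ℚ)+k+1)) = (p:ℚ)+k from by field_simp,
          show ((p:ℚ)+k+1) * (((k:ℚ)+1)/((p:ℚ)+k+1)) = (k:ℚ)+1 from by field_simp] at h
        exact h
      linear_combination (norm := module) hA'



private lemma Tent_mul : ∀ m n : ℕ, 1 ≤ m → 1 ≤ n →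
    Tent w (m * n) = (m : ℚ) • Tent w n + (n : ℚ) • Tent w m := by
  intro m
  induction m with
  | zero => omega
  | succ j IH =>
    intro n hm hn
    rcases Nat.eq_or_lt_of_le (Nat.one_le_iff_ne_zero.mpr (Nat.succ_ne_zero j)) with h1 | h1
    · have hj : j = 0 := by omega
      subst hj
      simp [Tent_one]
    · have hj : 1 ≤ j := by omega
      have hj0 : (0:ℚ) < j := by exact_mod_cast hj
      have hn0 : (0:ℚ) < n := by exact_mod_cast hn
      have hkey := Tent_key w hsym hassoc n (j * n) (Nat.mul_pos hj hn) hn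
      have hIH := IH n hj hn
      have hmul : (j+1) * n = j * n + n := by ring
      rw [hmul, hkey, hIH]
      have harg : ((j * n : ℕ) : ℚ) / ((j*n : ℕ) + (n:ℚ)) = (j:ℚ)/((j:ℚ)+1) := by
        push_cast
        rw [div_eq_div_iff (by positivity) (by positivity)]
        ring
      rw [harg]
      have hs2 : w ((j:ℚ) / ((j:ℚ)+1)) = w (1 / ((j:ℚ)+1)) := by
        rw [← hsym (1/((j:ℚ)+1)) (by positivity) (by rw [div_lt_one (by positivity)]; linarith)]
        congr 1
        field_simp; ring
      rw [hs2]
      have hT2 : Tent w (j + 1) = Tent w j + ((j:ℚ) + 1) • w (1 / ((j:ℚ)+1)) :=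
        Tent_succ w j hj
      rw [hT2]
      have hc1 : ((j * n + n : ℕ) : ℚ) = ((j:ℚ)+1) * n := by push_cast; ring
      have hc2 : ((j + 1 : ℕ) : ℚ) = (j:ℚ)+1 := by push_cast; ring
      rw [hc1, hc2]
      match_scalars <;> ring


private lemma Lent_mul (m n : ℕ) (hm : 1 ≤ m) (hn : 1 ≤ n) :
    Lent w (m * n) = Lent w m + Lent w n := by
  have hm0 : (0:ℚ) < m := by exact_mod_cast hm
  have hn0 : (0:ℚ) < n := by exact_mod_cast hn
  have hmne : (m:ℚ) ≠ 0 := hm0.ne'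
  have hnne : (n:ℚ) ≠ 0 := hn0.ne'
  unfold Lent
  rw [Tent_mul w hsym hassoc m n hm hn]
  rw [show ((m*n : ℕ):ℚ) = (m:ℚ)*n by push_cast; ring]
  match_scalars <;> field_simp <;> ring

private lemma chi_eq (a b : ℕ) (ha : 1 ≤ a) (hb : 1 ≤ b) :
    chiEnt w ((a:ℚ)/b) = Lent w b - Lent w a := by
  have ha0 : (0:ℚ) < a := by exact_mod_cast ha
  have hb0 : (0:ℚ) < b := by exact_mod_cast hb
  set q : ℚ := (a:ℚ)/b with hq
  have hq0 : 0 < q := by positivity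
  have hnum : 0 < q.num := Rat.num_pos.mpr hq0
  have hna : 1 ≤ q.num.natAbs := by
    have := Int.natAbs_pos.mpr hnum.ne'
    omega
  have hd0 : (0:ℚ) < (q.den:ℚ) := by exact_mod_cast q.pos
  have h : (q.num:ℚ)/(q.den:ℚ) = (a:ℚ)/b := by rw [Rat.num_div_den]
  rw [div_eq_div_iff hd0.ne' hb0.ne'] at h
  have h3 : ((q.num.natAbs : ℚ)) = (q.num:ℚ) := by
    rw [Nat.cast_natAbs, abs_of_nonneg hnum.le]
  rw [← h3] at h
  have hcrossN : q.num.natAbs * b = a * q.den := by exact_mod_cast h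
  have h5 : Lent w (q.num.natAbs * b) = Lent w (a * q.den) := by rw [hcrossN]
  rw [Lent_mul w hsym hassoc _ _ hna hb, Lent_mul w hsym hassoc _ _ ha q.pos] at h5
  show Lent w q.den - Lent w q.num.natAbs = Lent w b - Lent w a
  linear_combination (norm := module) (-1 : ℚ) • h5

end Aux

/-- Writing the uniquely divisible abelian group `G` additively (as a
`ℚ`-vector space, `g^α` being `α • g`): if `w : ℚ ∩ (0,1) → G` satisfies the
symmetry `w(1-α) = w(α)` and the associativity functional equation, then there
is a homomorphism `χ` from the multiplicative group of positive rationals to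
`G`, unique on the positive rationals, with
`χ(1/n) = w⁽ⁿ⁾(1/n, …, 1/n) = ∑_{j=2}^n (j/n) • w(1/j)` and
`w(β) = β • χ(β) + (1-β) • χ(1-β)` for all `β ∈ ℚ ∩ (0,1)`. -/
theorem solutions_are_entropy_form {G : Type*} [AddCommGroup G] [Module ℚ G]
    (w : ℚ → G)
    (hsym : ∀ α : ℚ, 0 < α → α < 1 → w (1 - α) = w α)
    (hassoc : ∀ α β : ℚ, 0 < α → α < 1 → 0 < β → β < 1 →
      w α + α • w β =
        w (α * β) + (1 - α * β) • w (α * (1 - β) / (1 - α * β))) :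
    ∃ χ : ℚ → G,
      (∀ a b : ℚ, 0 < a → 0 < b → χ (a * b) = χ a + χ b) ∧
      (∀ n : ℕ, 2 ≤ n →
        χ (1 / n) = ∑ j ∈ Finset.Icc 2 n, ((j : ℚ) / n) • w (1 / j)) ∧
      (∀ β : ℚ, 0 < β → β < 1 → w β = β • χ β + (1 - β) • χ (1 - β)) ∧
      (∀ χ' : ℚ → G,
        (∀ a b : ℚ, 0 < a → 0 < b → χ' (a * b) = χ' a + χ' b) →
        (∀ n : ℕ, 2 ≤ n →
          χ' (1 / n) = ∑ j ∈ Finset.Icc 2 n, ((j : ℚ) / n) • w (1 / j)) →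
        (∀ β : ℚ, 0 < β → β < 1 → w β = β • χ' β + (1 - β) • χ' (1 - β)) →
        ∀ q : ℚ, 0 < q → χ' q = χ q) := by
  classical
  -- cast helper
  have hcastnum : ∀ r : ℚ, 0 < r → ((r.num.natAbs : ℕ) : ℚ) = (r.num : ℚ) := by
    intro r hr
    rw [Nat.cast_natAbs, abs_of_nonneg (Rat.num_pos.mpr hr).le]
  have hrep : ∀ r : ℚ, 0 < r → r = ((r.num.natAbs : ℕ) : ℚ) / ((r.den : ℕ) : ℚ) := by
    intro r hr
    rw [hcastnum r hr, Rat.num_div_den]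
  have hnapos : ∀ r : ℚ, 0 < r → 1 ≤ r.num.natAbs := by
    intro r hr
    have := Int.natAbs_pos.mpr (Rat.num_pos.mpr hr).ne'
    omega
  -- Part 1 : multiplicativity
  have hmul : ∀ a b : ℚ, 0 < a → 0 < b →
      chiEnt w (a * b) = chiEnt w a + chiEnt w b := by
    intro a b ha hb
    have hab : a * b = (((a.num.natAbs * b.num.natAbs : ℕ)) : ℚ) /
        (((a.den * b.den : ℕ)) : ℚ) := by
      conv_lhs => rw [hrep a ha, hrep b hb]
      rw [div_mul_div_comm]
      push_cast
      ring
    conv_lhs => rw [hab]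
    conv_rhs => rw [hrep a ha, hrep b hb]
    rw [chi_eq w hsym hassoc _ _ (Nat.one_le_iff_ne_zero.mpr
        (Nat.mul_ne_zero (by have := hnapos a ha; omega) (by have := hnapos b hb; omega)))
        (Nat.one_le_iff_ne_zero.mpr (Nat.mul_ne_zero a.pos.ne' b.pos.ne')),
      chi_eq w hsym hassoc _ _ (hnapos a ha) a.pos,
      chi_eq w hsym hassoc _ _ (hnapos b hb) b.pos,
      Lent_mul w hsym hassoc _ _ (hnapos a ha) (hnapos b hb),
      Lent_mul w hsym hassoc _ _ a.pos b.pos]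
    abel
  -- Part 2 : values at 1/n
  have hval : ∀ n : ℕ, 2 ≤ n →
      chiEnt w ((1 : ℚ) / (n : ℚ)) = ∑ j ∈ Finset.Icc 2 n, ((j : ℚ) / n) • w (1 / j) := by
    intro n hn
    rw [show ((1:ℚ)/(n:ℚ)) = ((1:ℕ):ℚ)/((n:ℕ):ℚ) by norm_num]
    rw [chi_eq w hsym hassoc 1 n le_rfl (by omega), Lent_one, sub_zero]
    unfold Lent Tent
    rw [Finset.smul_sum]
    refine Finset.sum_congr rfl fun j _ => ?_
    rw [smul_smul, inv_mul_eq_div]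
  -- Part 3 : the entropy form
  have hw : ∀ β : ℚ, 0 < β → β < 1 →
      w β = β • chiEnt w β + (1 - β) • chiEnt w (1 - β) := by
    intro β hβ0 hβ1
    have hp : 1 ≤ β.num.natAbs := hnapos β hβ0
    have hd : 1 ≤ β.den := β.pos
    have hpq : β.num.natAbs < β.den := by
      have h1 : (β.num : ℚ) < (β.den : ℚ) := by
        have h2 := hβ1
        rw [← Rat.num_div_den β, div_lt_one (by exact_mod_cast β.pos)] at h2
        exact h2
      have h3 : β.num < (β.den : ℤ) := by exact_mod_cast h1
      have h4 := Rat.num_pos.mpr hβ0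
      omega
    set p := β.num.natAbs with hpdef
    set q := β.den with hqdef
    set r := q - p with hrdef
    have hr1 : 1 ≤ r := by omega
    have hpr : p + r = q := by omega
    have hq0 : (0:ℚ) < (q:ℚ) := by exact_mod_cast hd
    have hqne : (q:ℚ) ≠ 0 := hq0.ne'
    have hpne : (p:ℚ) ≠ 0 := by
      have : (0:ℚ) < (p:ℚ) := by exact_mod_cast hp
      exact this.ne'
    have hrne : (r:ℚ) ≠ 0 := by
      have : (0:ℚ) < (r:ℚ) := by exact_mod_cast hr1
      exact this.ne'
    have hβrep : β = ((p:ℕ):ℚ)/((q:ℕ):ℚ) := hrep β hβ0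
    have hargs : (p:ℚ) + (r:ℚ) = (q:ℚ) := by exact_mod_cast hpr
    have h1β : 1 - ((p:ℕ):ℚ)/((q:ℕ):ℚ) = ((r:ℕ):ℚ)/((q:ℕ):ℚ) := by
      rw [eq_div_iff hqne, sub_mul, div_mul_cancel₀ _ hqne]
      linarith [hargs]
    have hkey := Tent_key w hsym hassoc r p hp hr1
    rw [hpr] at hkey
    rw [hargs] at hkey
    conv_lhs => rw [hβrep]
    rw [hβrep, h1β, chi_eq w hsym hassoc p q hp hd, chi_eq w hsym hassoc r q hr1 hd]
    unfold Lent
    rw [hkey]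
    have hrq : ((r:ℕ):ℚ) = ((q:ℕ):ℚ) - ((p:ℕ):ℚ) := by linarith [hargs]
    have hqpne : ((q:ℕ):ℚ) - ((p:ℕ):ℚ) ≠ 0 := by rw [← hrq]; exact hrne
    rw [hrq]
    match_scalars <;> field_simp <;> ring
  refine ⟨chiEnt w, hmul, hval, hw, ?_⟩
  -- Part 4 : uniqueness
  intro χ' hmul' hval' _ s hs
  have hone : ∀ f : ℚ → G, (∀ a b : ℚ, 0 < a → 0 < b → f (a * b) = f a + f b) →
      f 1 = 0 := by
    intro f hf
    have := hf 1 1 one_pos one_pos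
    rw [mul_one] at this
    exact (left_eq_add.mp this)
  have hdec : ∀ f : ℚ → G, (∀ a b : ℚ, 0 < a → 0 < b → f (a * b) = f a + f b) →
      ∀ t : ℚ, 0 < t →
      f t = f (1 / ((t.den : ℕ) : ℚ)) - f (1 / ((t.num.natAbs : ℕ) : ℚ)) := by
    intro f hf t ht
    have hna0 : (0:ℚ) < ((t.num.natAbs : ℕ) : ℚ) := by
      have := hnapos t ht; exact_mod_cast this
    have hden0 : (0:ℚ) < ((t.den : ℕ) : ℚ) := by exact_mod_cast t.pos
    have hc : t * ((t.den : ℕ) : ℚ) = ((t.num.natAbs : ℕ) : ℚ) := by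
      rw [hcastnum t ht]
      exact_mod_cast Rat.mul_den_eq_num t
    have h1 : t * (1 / ((t.num.natAbs : ℕ) : ℚ)) = 1 / ((t.den : ℕ) : ℚ) := by
      rw [mul_one_div, div_eq_div_iff hna0.ne' hden0.ne', one_mul]
      exact hc
    have h2 := hf t (1 / ((t.num.natAbs : ℕ) : ℚ)) ht (by positivity)
    rw [h1] at h2
    rw [h2]
    abel
  have hvals : ∀ n : ℕ, 1 ≤ n → χ' (1 / ((n : ℕ) : ℚ)) = chiEnt w (1 / ((n : ℕ) : ℚ)) := by
    intro n hn
    rcases Nat.lt_or_ge n 2 with h | h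
    · have hn1 : n = 1 := by omega
      subst hn1
      rw [show (1 / ((1 : ℕ) : ℚ)) = (1:ℚ) by norm_num]
      rw [hone χ' hmul', hone (chiEnt w) hmul]
    · rw [hval' n h, hval n h]
  rw [hdec χ' hmul' s hs, hdec (chiEnt w) hmul s hs,
    hvals s.den s.pos, hvals s.num.natAbs (hnapos s hs)]
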